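/- Let $n\ge 2$, $K$ a field, and suppose families $(\mathfrak{p}_{ij}^k)$ and $(\mathfrak{d}_{ij}^k)$ (indices $0\le i,j,k<n$) satisfy: $\mathfrak{p}_{ij}^k=\mathfrak{d}_{ij}^k=0$ if $j>0$ or $k>i$, $\mathfrak{p}_{00}^0=\mathfrak{d}_{00}^0=1$, $\mathfrak{p}_{i0}^k=\sum_{i_1+\cdots+i_k=i,\ i_s>0}\prod_s\mathfrak{p}_{i_s0}^1$, $\mathfrak{d}_{i0}^k=\sum_{i_1+\cdots+i_k=i,\ i_s>0}\prod_s\mathfrak{d}_{i_s0}^1$, and $\sum_{h=1}^{i}\mathfrak{p}_{i0}^h\mathfrak{d}_{h0}^1=\sum_{h=1}^{i}\mathfrak{d}_{i0}^h\mathfrak{p}_{h0}^1$ for all $i$. Then all three braid equations $\sum_{a+b=j}\sum_{h,l}\mathfrak{p}_{ia}^h\mathfrak{d}_{kb}^l\mathfrak{p}_{hl}^1=\sum_{c+d=k}\sum_{h,l}\mathfrak{p}_{ic}^h\mathfrak{p}_{jd}^l\mathfrak{p}_{hl}^1$, $\sum_{a+b=j}\sum_{h,l}\mathfrak{p}_{ia}^h\mathfrak{p}_{kb}^l\mathfrak{d}_{hl}^1=\sum_{c+d=k}\sum_{h,l}\mathfrak{d}_{ic}^h\mathfrak{d}_{jd}^l\mathfrak{p}_{hl}^1$,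 and $\sum_{a+b=j}\sum_{h,l}\mathfrak{d}_{ia}^h\mathfrak{p}_{kb}^l\mathfrak{d}_{hl}^1=\sum_{c+d=k}\sum_{h,l}\mathfrak{d}_{ic}^h\mathfrak{d}_{jd}^l\mathfrak{d}_{hl}^1$ hold for all $i,j,k$. -/

import Mathlib

open Finset

private lemma key17 {K : Type*} [Field K] (n i j k : ℕ) (hn : 2 ≤ n)
    (hi : i < n) (hj : j < n) (hk : k < n) (f g e : ℕ → ℕ → ℕ → K)
    (hf : ∀ i' j' k', i' < n → j' < n → k' < n → (0 < j' ∨ i' < k') → f i' j' k' = 0)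
    (hg : ∀ i' j' k', i' < n → j' < n → k' < n → (0 < j' ∨ i' < k') → g i' j' k' = 0)
    (he : ∀ i' j' k', i' < n → j' < n → k' < n → (0 < j' ∨ i' < k') → e i' j' k' = 0)
    (hg0 : g k 0 0 = if k = 0 then 1 else 0) :
    ∑ ab ∈ Finset.HasAntidiagonal.antidiagonal j, ∑ h ∈ Finset.range (i + 1),
        ∑ l ∈ Finset.range (k + 1), f i ab.1 h * g k ab.2 l * e h l 1
      = if j = 0 ∧ k = 0 then ∑ h ∈ Finset.Icc 1 i, f i 0 h * e h 0 1 else 0 := by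
  rcases Nat.eq_zero_or_pos j with hj0 | hj0
  · subst hj0
    rw [Finset.Nat.antidiagonal_zero, Finset.sum_singleton]
    have hstep : ∀ h ∈ Finset.range (i + 1),
        ∑ l ∈ Finset.range (k + 1), f i 0 h * g k 0 l * e h l 1
          = f i 0 h * g k 0 0 * e h 0 1 := by
      intro h hh
      rw [Finset.mem_range, Nat.lt_succ_iff] at hh
      apply Finset.sum_eq_single_of_mem 0 (by simp)
      intro l hl hl0
      rw [Finset.mem_range, Nat.lt_succ_iff] at hl
      rw [he h l 1 (lt_of_le_of_lt hh hi) (lt_of_le_of_lt hl hk) (by omega)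
        (Or.inl (Nat.pos_of_ne_zero hl0)), mul_zero]
    rw [Finset.sum_congr rfl hstep, hg0]
    rcases Nat.eq_zero_or_pos k with hk0 | hk0
    · subst hk0
      simp only [if_pos rfl, and_self, mul_one]
      have hr : Finset.range (i + 1) = insert 0 (Finset.Icc 1 i) := by
        ext x; simp [Nat.lt_succ_iff]; omega
      rw [hr, Finset.sum_insert (by simp)]
      rw [he 0 0 1 (by omega) (by omega) (by omega) (Or.inr (by omega)), mul_zero, zero_add]
      simp
    · rw [if_neg (by omega), if_neg (by omega)]
      simp
  · rw [if_neg (by omega)]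
    apply Finset.sum_eq_zero
    intro ab hab
    rw [Finset.HasAntidiagonal.mem_antidiagonal] at hab
    apply Finset.sum_eq_zero
    intro h hh
    rw [Finset.mem_range, Nat.lt_succ_iff] at hh
    apply Finset.sum_eq_zero
    intro l hl
    rw [Finset.mem_range, Nat.lt_succ_iff] at hl
    rcases Nat.eq_zero_or_pos ab.1 with h1 | h1
    · rw [hg k ab.2 l hk (by omega) (lt_of_le_of_lt hl hk) (Or.inl (by omega)),
        mul_zero, zero_mul]
    · rw [hf i ab.1 h hi (by omega) (lt_of_le_of_lt hh hi) (Or.inl h1), zero_mul, zero_mul]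

private lemma aux00 {K : Type*} [Field K] (n : ℕ) (hn : 2 ≤ n) (p : ℕ → ℕ → ℕ → K)
    (hp00 : p 0 0 0 = 1)
    (hpform : ∀ i k, i < n → k < n → p i 0 k =
      ∑ t ∈ (Finset.Nat.antidiagonalTuple k i).filter (fun t => ∀ s : Fin k, 0 < t s),
        ∏ s : Fin k, p (t s) 0 1)
    (k : ℕ) (hk : k < n) : p k 0 0 = if k = 0 then 1 else 0 := by
  cases k with
  | zero => simpa using hp00
  | succ m =>
    rw [hpform (m+1) 0 hk (by omega), if_neg (by omega)]
    simp [Finset.Nat.antidiagonalTuple_zero_succ]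

/-- verification of the three braid equations for the coefficients
arising in the case where `p 1 0 1` is not a root of unity of order `< n`. -/
theorem stmt17 {K : Type*} [Field K] (n : ℕ) (hn : 2 ≤ n) (p d : ℕ → ℕ → ℕ → K)
    (hpv : ∀ i j k, i < n → j < n → k < n → (0 < j ∨ i < k) → p i j k = 0)
    (hdv : ∀ i j k, i < n → j < n → k < n → (0 < j ∨ i < k) → d i j k = 0)
    (hp00 : p 0 0 0 = 1) (hd00 : d 0 0 0 = 1)
    (hpform : ∀ i k, i < n → k < n → p i 0 k =
      ∑ t ∈ (Finset.Nat.antidiagonalTuple k i).filter (fun t => ∀ s : Fin k, 0 < t s),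
        ∏ s : Fin k, p (t s) 0 1)
    (hdform : ∀ i k, i < n → k < n → d i 0 k =
      ∑ t ∈ (Finset.Nat.antidiagonalTuple k i).filter (fun t => ∀ s : Fin k, 0 < t s),
        ∏ s : Fin k, d (t s) 0 1)
    (hsym : ∀ i, i < n →
      ∑ h ∈ Finset.Icc 1 i, p i 0 h * d h 0 1 = ∑ h ∈ Finset.Icc 1 i, d i 0 h * p h 0 1) :
    ∀ i j k, i < n → j < n → k < n →
      (∑ ab ∈ Finset.HasAntidiagonal.antidiagonal j, ∑ h ∈ Finset.range (i + 1),
          ∑ l ∈ Finset.range (k + 1), p i ab.1 h * d k ab.2 l * p h l 1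
        = ∑ cd ∈ Finset.HasAntidiagonal.antidiagonal k, ∑ h ∈ Finset.range (i + 1),
          ∑ l ∈ Finset.range (j + 1), p i cd.1 h * p j cd.2 l * p h l 1) ∧
      (∑ ab ∈ Finset.HasAntidiagonal.antidiagonal j, ∑ h ∈ Finset.range (i + 1),
          ∑ l ∈ Finset.range (k + 1), p i ab.1 h * p k ab.2 l * d h l 1
        = ∑ cd ∈ Finset.HasAntidiagonal.antidiagonal k, ∑ h ∈ Finset.range (i + 1),
          ∑ l ∈ Finset.range (j + 1), d i cd.1 h * d j cd.2 l * p h l 1) ∧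
      (∑ ab ∈ Finset.HasAntidiagonal.antidiagonal j, ∑ h ∈ Finset.range (i + 1),
          ∑ l ∈ Finset.range (k + 1), d i ab.1 h * p k ab.2 l * d h l 1
        = ∑ cd ∈ Finset.HasAntidiagonal.antidiagonal k, ∑ h ∈ Finset.range (i + 1),
          ∑ l ∈ Finset.range (j + 1), d i cd.1 h * d j cd.2 l * d h l 1) := by
  intro i j k hi hj hk
  have pk0 := aux00 n hn p hp00 hpform
  have dk0 := aux00 n hn d hd00 hdform
  refine ⟨?_, ?_, ?_⟩
  · rw [key17 n i j k hn hi hj hk p d p hpv hdv hpv (dk0 k hk),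
      key17 n i k j hn hi hk hj p p p hpv hpv hpv (pk0 j hj)]
    exact if_congr and_comm rfl rfl
  · rw [key17 n i j k hn hi hj hk p p d hpv hpv hdv (pk0 k hk),
      key17 n i k j hn hi hk hj d d p hdv hdv hpv (dk0 j hj), hsym i hi]
    exact if_congr and_comm rfl rfl
  · rw [key17 n i j k hn hi hj hk d p d hdv hpv hdv (pk0 k hk),
      key17 n i k j hn hi hk hj d d d hdv hdv hdv (dk0 j hj)]
    exact if_congr and_comm rfl rfl
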